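/- For all a ∈ [1,2] and b ∈ (0,1], if X ~ Beta(a,b), then P(X < 1/17 | X ≤ 1/2) ≤ 1/2. -/
import Mathlib


open MeasureTheory

/-- The Beta(a,b) distribution on ℝ, given by its density on `(0,1)`. -/
noncomputable def betaMeasure (a b : ℝ) : Measure ℝ :=
  volume.withDensity (fun x => ENNReal.ofReal
    (if x ∈ Set.Ioo (0 : ℝ) 1 then
      x ^ (a - 1) * (1 - x) ^ (b - 1) * (Real.Gamma (a + b) / (Real.Gamma a * Real.Gamma b))
    else 0))


section Aux
open scoped Real
open intervalIntegral in
lemma auxIntegralIoo : ∫ x in Set.Ioo (0:ℝ) (1/2), x = 1/8 := by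
  rw [← MeasureTheory.integral_Ioc_eq_integral_Ioo,
    ← integral_of_le (by norm_num : (0:ℝ) ≤ 1/2)]
  rw [integral_id]
  norm_num

open intervalIntegral in
lemma auxIntegrableIoo : MeasureTheory.IntegrableOn (fun x : ℝ => x) (Set.Ioo (0:ℝ) (1/2)) volume :=
  (intervalIntegrable_iff_integrableOn_Ioo_of_le (by norm_num)).mp intervalIntegrable_id
end Aux

/-- For `a ∈ [1,2]`, `b ∈ (0,1]` and `X ~ Beta(a,b)`,
`P(X < 1/17 ∣ X ≤ 1/2) ≤ 1/2`. -/
theorem stmt18 (a b : ℝ) (ha : a ∈ Set.Icc (1 : ℝ) 2) (hb : b ∈ Set.Ioc (0 : ℝ) 1) :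
    betaMeasure a b (Set.Iio (1 / 17 : ℝ)) / betaMeasure a b (Set.Iic (1 / 2 : ℝ))
      ≤ 1 / 2 := by
  obtain ⟨ha1, ha2⟩ := ha
  obtain ⟨hb0, hb1⟩ := hb
  set C : ℝ := Real.Gamma (a + b) / (Real.Gamma a * Real.Gamma b) with hCdef
  have hC : 0 < C := by
    apply div_pos (Real.Gamma_pos_of_pos (by linarith))
    exact mul_pos (Real.Gamma_pos_of_pos (by linarith)) (Real.Gamma_pos_of_pos hb0)
  set f : ℝ → ENNReal := fun x => ENNReal.ofReal
    (if x ∈ Set.Ioo (0 : ℝ) 1 then x ^ (a - 1) * (1 - x) ^ (b - 1) * C else 0) with hfdef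
  have hfmeas : Measurable f := by
    apply ENNReal.measurable_ofReal.comp
    apply Measurable.ite measurableSet_Ioo _ measurable_const
    fun_prop
  -- Numerator bound
  have hnum : betaMeasure a b (Set.Iio (1 / 17 : ℝ)) ≤ ENNReal.ofReal (C / 16) := by
    rw [betaMeasure, withDensity_apply _ measurableSet_Iio]
    calc ∫⁻ x in Set.Iio (1/17 : ℝ), f x
        ≤ ∫⁻ x in Set.Iio (1/17 : ℝ),
            (Set.Ioo (0:ℝ) (1/17)).indicator (fun _ => ENNReal.ofReal (17/16 * C)) x := by
          apply setLIntegral_mono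
          · exact (measurable_const.indicator measurableSet_Ioo)
          · intro x hx
            by_cases hx0 : x ∈ Set.Ioo (0:ℝ) (1/17)
            · rw [Set.indicator_of_mem hx0]
              have hx01 : x ∈ Set.Ioo (0:ℝ) 1 := ⟨hx0.1, by linarith [hx0.2]⟩
              simp only [hfdef, if_pos hx01]
              apply ENNReal.ofReal_le_ofReal
              have h1 : x ^ (a-1) ≤ 1 := Real.rpow_le_one hx01.1.le hx01.2.le (by linarith)
              have h2 : (1-x) ^ (b-1) ≤ 17/16 := by
                have : (1-x) ^ (b-1) ≤ (16/17 : ℝ) ^ (b-1) := by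
                  apply Real.rpow_le_rpow_of_nonpos (by norm_num) (by linarith [hx0.2]) (by linarith)
                refine this.trans ?_
                calc (16/17 : ℝ) ^ (b-1) ≤ (16/17 : ℝ) ^ (-1 : ℝ) :=
                      Real.rpow_le_rpow_of_exponent_ge (by norm_num) (by norm_num) (by linarith)
                  _ = 17/16 := by
                      rw [Real.rpow_neg_one]; norm_num
              calc x ^ (a-1) * (1-x) ^ (b-1) * C ≤ 1 * (17/16) * C := by
                    apply mul_le_mul_of_nonneg_right _ hC.le
                    exact mul_le_mul h1 h2 (Real.rpow_nonneg (by linarith [hx01.2]) _) one_pos.le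
                _ = 17/16 * C := by ring
            · rw [Set.indicator_of_notMem hx0]
              have hnm : x ∉ Set.Ioo (0:ℝ) 1 := fun hmem => hx0 ⟨hmem.1, hx⟩
              simp only [hfdef, if_neg hnm, ENNReal.ofReal_zero, le_refl]
      _ = ENNReal.ofReal (17/16 * C) * volume (Set.Ioo (0:ℝ) (1/17)) := by
          rw [lintegral_indicator measurableSet_Ioo, setLIntegral_const,
            Measure.restrict_apply measurableSet_Ioo]
          have hinter : Set.Ioo (0:ℝ) (1/17) ∩ Set.Iio (1/17) = Set.Ioo (0:ℝ) (1/17) :=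
            Set.inter_eq_left.mpr (fun x hx => hx.2)
          rw [hinter]
      _ = ENNReal.ofReal (C / 16) := by
          rw [Real.volume_Ioo, ← ENNReal.ofReal_mul (by positivity)]
          congr 1
          ring
  -- Denominator bound
  have hden : ENNReal.ofReal (C / 8) ≤ betaMeasure a b (Set.Iic (1 / 2 : ℝ)) := by
    rw [betaMeasure, withDensity_apply _ measurableSet_Iic]
    have hsub : Set.Ioo (0:ℝ) (1/2) ⊆ Set.Iic (1/2 : ℝ) := fun x hx => hx.2.le
    refine le_trans ?_ (lintegral_mono_set hsub)
    have hpt : ∀ x ∈ Set.Ioo (0:ℝ) (1/2), ENNReal.ofReal (C * x) ≤ f x := by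
      intro x hx
      have hx01 : x ∈ Set.Ioo (0:ℝ) 1 := ⟨hx.1, by linarith [hx.2]⟩
      simp only [hfdef, if_pos hx01]
      apply ENNReal.ofReal_le_ofReal
      have h1 : x ≤ x ^ (a-1) := by
        calc x = x ^ (1:ℝ) := (Real.rpow_one x).symm
          _ ≤ x ^ (a-1) := Real.rpow_le_rpow_of_exponent_ge hx01.1 hx01.2.le (by linarith)
      have h2 : (1:ℝ) ≤ (1-x) ^ (b-1) := by
        calc (1:ℝ) = (1-x) ^ (0:ℝ) := (Real.rpow_zero _).symm
          _ ≤ (1-x) ^ (b-1) :=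
            Real.rpow_le_rpow_of_exponent_ge (by linarith [hx01.2]) (by linarith [hx01.1]) (by linarith)
      calc C * x = x * 1 * C := by ring
        _ ≤ x ^ (a-1) * (1-x) ^ (b-1) * C := by
            apply mul_le_mul_of_nonneg_right _ hC.le
            exact mul_le_mul h1 h2 one_pos.le (Real.rpow_nonneg hx01.1.le _)
    refine le_trans ?_ (setLIntegral_mono hfmeas hpt)
    have hint : Integrable (fun x : ℝ => C * x) (volume.restrict (Set.Ioo (0:ℝ) (1/2))) := by
      apply Integrable.const_mul
      exact auxIntegrableIoo
    rw [← MeasureTheory.ofReal_integral_eq_lintegral_ofReal hint]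
    · apply ENNReal.ofReal_le_ofReal
      rw [MeasureTheory.integral_const_mul]
      rw [auxIntegralIoo]; nlinarith
    · filter_upwards [ae_restrict_mem measurableSet_Ioo] with x hx
      exact mul_nonneg hC.le hx.1.le
  calc betaMeasure a b (Set.Iio (1/17 : ℝ)) / betaMeasure a b (Set.Iic (1/2 : ℝ))
      ≤ ENNReal.ofReal (C / 16) / ENNReal.ofReal (C / 8) := ENNReal.div_le_div hnum hden
    _ = ENNReal.ofReal ((C / 16) / (C / 8)) := (ENNReal.ofReal_div_of_pos (by positivity)).symm
    _ = ENNReal.ofReal (1/2) := by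
        congr 1
        field_simp
        ring
    _ ≤ 1 / 2 := by
        rw [ENNReal.ofReal_div_of_pos (by norm_num)]
        simp
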